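/- Let p ∈ ℕ, let E = EuclideanSpace ℝ (Fin p), let L > 0, and let S : E → E be L-Lipschitz. Let t ∈ ℝ satisfy 0 ≤ t, t ≤ 1 and t ≤ 1/(12·L). Let γ_p denote the standard Gaussian measure on E. Then, writing a_t(a₀, z) := Real.exp t • a₀ + (2·(Real.exp t − 1)) • S a₀ + Real.sqrt (Real.exp t − 1) • z, the following inequality of Lebesgue integrals (with values in [0,∞]) holds: ∫∫ ‖S (a_t(a₀,z)) − S a₀‖² dγ_p(a₀) dγ_p(z) ≤ 36·p·L²·t·(1 + t) + 72·L²·t² · ∫∫ ‖S (a_t(a₀,z))‖² dγ_p(a₀) dγ_p(z). -/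

import Mathlib

open MeasureTheory ProbabilityTheory Real Set

/-- The standard Gaussian measure on `EuclideanSpace ℝ (Fin p)`, i.e. the product over the `p`
coordinates of the real Gaussian measure with mean `0` and variance `1`. -/
noncomputable def stdGaussian (p : ℕ) : Measure (EuclideanSpace ℝ (Fin p)) :=
  Measure.map (MeasurableEquiv.toLp 2 (Fin p → ℝ))
    (Measure.pi fun _ : Fin p => gaussianReal 0 1)

lemma aux_integrable_sq_exp :
    Integrable (fun x : ℝ => x ^ 2 * Real.exp (-(2⁻¹:ℝ) * x ^ 2)) := by
  have h := integrable_rpow_mul_exp_neg_mul_sq (b := (2⁻¹:ℝ)) (by norm_num) (s := 2) (by norm_num)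
  simpa [Real.rpow_natCast] using h

lemma aux_tendsto : Filter.Tendsto (fun x : ℝ => x * Real.exp (-(2⁻¹:ℝ) * x ^ 2))
    Filter.atTop (nhds 0) := by
  have h := rpow_mul_exp_neg_mul_sq_isLittleO_exp_neg (b := (2⁻¹:ℝ)) (by norm_num) 1
  have h2 : Filter.Tendsto (fun x : ℝ => Real.exp (-(1/2) * x)) Filter.atTop (nhds 0) := by
    apply Real.tendsto_exp_atBot.comp
    have : Filter.Tendsto (fun x : ℝ => -(1/2) * x) Filter.atTop Filter.atBot := by
      apply Filter.tendsto_atBot_mono (fun x => le_refl _)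
      exact Filter.tendsto_id.const_mul_atTop_of_neg (by norm_num)
    exact this
  have := h.isBigO.trans_tendsto h2
  simpa [Real.rpow_one] using this

lemma aux_Ioi : ∫ x in Ioi (0:ℝ), (x ^ 2 - 1) * Real.exp (-(2⁻¹:ℝ) * x ^ 2) = 0 := by
  have hderiv : ∀ x ∈ Ici (0:ℝ), HasDerivAt (fun x : ℝ => -(x * Real.exp (-(2⁻¹:ℝ) * x ^ 2)))
      ((x ^ 2 - 1) * Real.exp (-(2⁻¹:ℝ) * x ^ 2)) x := by
    intro x _
    have h1 : HasDerivAt (fun x : ℝ => -(2⁻¹:ℝ) * x ^ 2) (-x) x := by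
      simpa using ((hasDerivAt_pow 2 x).const_mul (-(2⁻¹:ℝ)))
    have h2 := (h1.exp)
    have h3 := ((hasDerivAt_id x).mul h2).neg
    exact h3.congr_deriv (by simp only [id_eq]; ring)
  have hint : IntegrableOn (fun x : ℝ => (x ^ 2 - 1) * Real.exp (-(2⁻¹:ℝ) * x ^ 2)) (Ioi 0) := by
    have := (aux_integrable_sq_exp.sub (integrable_exp_neg_mul_sq (b := (2⁻¹:ℝ)) (by norm_num)))
    apply Integrable.integrableOn
    simpa [sub_mul, Pi.sub_def] using this
  have := integral_Ioi_of_hasDerivAt_of_tendsto' hderiv hint (by simpa using aux_tendsto.neg)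
  simpa using this

lemma aux_integral_sq_gaussian :
    ∫ x : ℝ, x ^ 2 * Real.exp (-(2⁻¹:ℝ) * x ^ 2) = Real.sqrt (2 * π) := by
  have hIoi_exp : ∫ x in Ioi (0:ℝ), Real.exp (-(2⁻¹:ℝ) * x ^ 2) = Real.sqrt (2 * π) / 2 := by
    have := integral_gaussian_Ioi (2⁻¹:ℝ)
    rw [this]
    rw [show (π/(2⁻¹:ℝ)) = 2*π by ring]
  have hsub : ∫ x in Ioi (0:ℝ), (x ^ 2 - 1) * Real.exp (-(2⁻¹:ℝ) * x ^ 2)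
      = (∫ x in Ioi (0:ℝ), x ^ 2 * Real.exp (-(2⁻¹:ℝ) * x ^ 2))
        - ∫ x in Ioi (0:ℝ), Real.exp (-(2⁻¹:ℝ) * x ^ 2) := by
    rw [← integral_sub (aux_integrable_sq_exp.integrableOn)
      ((integrable_exp_neg_mul_sq (by norm_num)).integrableOn)]
    congr 1; ext x; ring
  have hIoi : ∫ x in Ioi (0:ℝ), x ^ 2 * Real.exp (-(2⁻¹:ℝ) * x ^ 2) = Real.sqrt (2 * π) / 2 := by
    have h0 := aux_Ioi
    rw [hsub] at h0
    linarith [hIoi_exp]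
  have habs : (fun x : ℝ => x ^ 2 * Real.exp (-(2⁻¹:ℝ) * x ^ 2))
      = fun x : ℝ => |x| ^ 2 * Real.exp (-(2⁻¹:ℝ) * |x| ^ 2) := by
    ext x; rw [sq_abs]
  rw [habs, integral_comp_abs (f := fun x : ℝ => x ^ 2 * Real.exp (-(2⁻¹:ℝ) * x ^ 2)), hIoi]
  ring

lemma aux_lintegral_sq_gaussianReal :
    ∫⁻ x, ENNReal.ofReal (x ^ 2) ∂(gaussianReal 0 1) = 1 := by
  rw [gaussianReal_of_var_ne_zero 0 one_ne_zero,
    lintegral_withDensity_eq_lintegral_mul _ (measurable_gaussianPDF 0 1) (by fun_prop)]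
  have hpdf : ∀ x : ℝ, (gaussianPDF 0 1 * fun x => ENNReal.ofReal (x ^ 2)) x
      = ENNReal.ofReal (gaussianPDFReal 0 1 x * x ^ 2) := by
    intro x
    rw [Pi.mul_apply, gaussianPDF_def, ← ENNReal.ofReal_mul (gaussianPDFReal_nonneg 0 1 x)]
  simp_rw [hpdf]
  have hpdfR : ∀ x : ℝ, gaussianPDFReal 0 1 x * x ^ 2
      = (Real.sqrt (2 * π))⁻¹ * (x ^ 2 * Real.exp (-(2⁻¹:ℝ) * x ^ 2)) := by
    intro x
    rw [gaussianPDFReal_def]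
    push_cast
    rw [show (-(x - 0) ^ 2 / (2 * 1)) = (-(2⁻¹:ℝ) * x ^ 2) by ring]
    rw [show (2 * π * 1 : ℝ) = 2 * π by ring]
    ring
  simp_rw [hpdfR]
  have hint : Integrable (fun x : ℝ =>
      (Real.sqrt (2 * π))⁻¹ * (x ^ 2 * Real.exp (-(2⁻¹:ℝ) * x ^ 2))) :=
    aux_integrable_sq_exp.const_mul _
  rw [← ofReal_integral_eq_lintegral_ofReal hint (Filter.Eventually.of_forall fun x => by positivity)]
  rw [integral_const_mul, aux_integral_sq_gaussian,
    inv_mul_cancel₀ (by positivity : Real.sqrt (2*π) ≠ 0), ENNReal.ofReal_one]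

lemma aux_pi_map_eval {ι : Type*} [Fintype ι] [DecidableEq ι] {α : ι → Type*}
    [∀ i, MeasurableSpace (α i)]
    (μ : ∀ i, Measure (α i)) [∀ i, IsProbabilityMeasure (μ i)] (i : ι) :
    (Measure.pi μ).map (Function.eval i) = μ i := by
  ext s hs
  rw [Measure.map_apply (measurable_pi_apply i) hs, Set.eval_preimage, Measure.pi_pi]
  rw [Fintype.prod_eq_single i (fun j hj => by
    rw [Function.update_of_ne hj]; exact measure_univ)]
  rw [Function.update_self]

instance stdGaussian_isProb (p : ℕ) : IsProbabilityMeasure (stdGaussian p) := by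
  unfold _root_.stdGaussian
  exact Measure.isProbabilityMeasure_map
    ((MeasurableEquiv.toLp 2 (Fin p → ℝ)).measurable.aemeasurable)

lemma aux_lintegral_normsq (p : ℕ) :
    ∫⁻ a, ENNReal.ofReal (‖a‖ ^ 2) ∂(stdGaussian p) = p := by
  rw [_root_.stdGaussian, lintegral_map (by fun_prop)
    (MeasurableEquiv.toLp 2 (Fin p → ℝ)).measurable]
  have hnorm : ∀ x : Fin p → ℝ,
      ‖(MeasurableEquiv.toLp 2 (Fin p → ℝ)) x‖ ^ 2 = ∑ i, (x i) ^ 2 := by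
    intro x
    rw [EuclideanSpace.norm_eq, Real.sq_sqrt (by positivity)]
    simp [Real.norm_eq_abs, sq_abs]
  simp_rw [hnorm, ENNReal.ofReal_sum_of_nonneg (fun i _ => sq_nonneg _)]
  rw [lintegral_finset_sum _ (fun i _ => by fun_prop)]
  have heach : ∀ i : Fin p, ∫⁻ x : Fin p → ℝ, ENNReal.ofReal ((x i) ^ 2)
      ∂(Measure.pi fun _ : Fin p => gaussianReal 0 1) = 1 := by
    intro i
    have := (lintegral_map (μ := Measure.pi fun _ : Fin p => gaussianReal 0 1)
      (f := fun y : ℝ => ENNReal.ofReal (y ^ 2)) (g := Function.eval i)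
      (by fun_prop) (measurable_pi_apply i)).symm
    rw [this, aux_pi_map_eval (fun _ : Fin p => gaussianReal 0 1) i,
      aux_lintegral_sq_gaussianReal]
  simp [heach]

set_option maxHeartbeats 1000000 in
lemma aux_pointwise {p : ℕ} {L : ℝ} (hL : 0 < L)
    {S : EuclideanSpace ℝ (Fin p) → EuclideanSpace ℝ (Fin p)}
    (hS : ∀ a a' : EuclideanSpace ℝ (Fin p), ‖S a - S a'‖ ≤ L * ‖a - a'‖)
    {t : ℝ} (ht0 : 0 ≤ t) (ht1 : t ≤ 1) (ht2 : t ≤ 1 / (12 * L))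
    (a₀ z : EuclideanSpace ℝ (Fin p)) :
    ‖S (Real.exp t • a₀ + (2 * (Real.exp t - 1)) • S a₀ +
        Real.sqrt (Real.exp t - 1) • z) - S a₀‖ ^ 2 ≤
      36 * L ^ 2 * t ^ 2 * ‖a₀‖ ^ 2 + 18 * L ^ 2 * t * ‖z‖ ^ 2 +
        72 * L ^ 2 * t ^ 2 * ‖S (Real.exp t • a₀ + (2 * (Real.exp t - 1)) • S a₀ +
          Real.sqrt (Real.exp t - 1) • z)‖ ^ 2 := by
  set m : ℝ := Real.exp t - 1 with hm
  have hm0 : 0 ≤ m := by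
    have := Real.one_le_exp ht0
    simp [hm]; linarith
  have hm2 : m ≤ 2 * t := by
    have hc := convexOn_exp.2 (Set.mem_univ (0:ℝ)) (Set.mem_univ (1:ℝ))
      (by linarith : (0:ℝ) ≤ 1 - t) ht0 (by ring)
    simp only [smul_eq_mul, mul_zero, mul_one, zero_add, Real.exp_zero] at hc
    have he : Real.exp 1 < 2.7182818286 := Real.exp_one_lt_d9
    rw [hm]
    nlinarith
  have h12 : 12 * L * t ≤ 1 := by
    rw [le_div_iff₀ (by positivity)] at ht2
    linarith
  have h13 : 2 * L * m ≤ 1 / 3 := by nlinarith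
  set A := Real.exp t • a₀ + (2 * m) • S a₀ + Real.sqrt m • z with hA
  set X := ‖S A - S a₀‖ with hX
  have hX0 : 0 ≤ X := norm_nonneg _
  have hdiff : A - a₀ = m • a₀ + (2 * m) • S a₀ + Real.sqrt m • z := by
    rw [hA, hm]; module
  have hD : ‖A - a₀‖ ≤ m * ‖a₀‖ + 2 * m * ‖S a₀‖ + Real.sqrt m * ‖z‖ := by
    rw [hdiff]
    refine le_trans (norm_add_le _ _) ?_
    gcongr ?_ + ?_
    · refine le_trans (norm_add_le _ _) ?_
      gcongr ?_ + ?_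
      · rw [norm_smul, Real.norm_eq_abs, abs_of_nonneg hm0]
      · rw [norm_smul, Real.norm_eq_abs, abs_of_nonneg (by linarith : (0:ℝ) ≤ 2*m)]
    · rw [norm_smul, Real.norm_eq_abs, abs_of_nonneg (Real.sqrt_nonneg m)]
  have hSa₀ : ‖S a₀‖ ≤ ‖S A‖ + X := by
    calc ‖S a₀‖ = ‖S A - (S A - S a₀)‖ := by rw [sub_sub_cancel]
    _ ≤ ‖S A‖ + X := norm_sub_le _ _
  have hXle : X ≤ L * (m * ‖a₀‖ + 2 * m * (‖S A‖ + X) + Real.sqrt m * ‖z‖) := by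
    refine le_trans (hS A a₀) ?_
    have : m * ‖a₀‖ + 2 * m * ‖S a₀‖ + Real.sqrt m * ‖z‖ ≤
        m * ‖a₀‖ + 2 * m * (‖S A‖ + X) + Real.sqrt m * ‖z‖ := by
      have := mul_le_mul_of_nonneg_left hSa₀ (by linarith : (0:ℝ) ≤ 2*m)
      linarith
    exact le_trans (mul_le_mul_of_nonneg_left hD hL.le) (mul_le_mul_of_nonneg_left this hL.le)
  have hsq : Real.sqrt m ^ 2 = m := Real.sq_sqrt hm0
  set s : ℝ := Real.sqrt m with hsdef
  have hs0 : 0 ≤ s := Real.sqrt_nonneg m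
  set na : ℝ := ‖a₀‖ with hnadef
  set nz : ℝ := ‖z‖ with hnzdef
  set nS : ℝ := ‖S A‖ with hnSdef
  have hna : (0:ℝ) ≤ na := norm_nonneg _
  have hnz : (0:ℝ) ≤ nz := norm_nonneg _
  have hnS : (0:ℝ) ≤ nS := norm_nonneg _
  clear_value m A X s na nz nS
  clear hdiff hD hSa₀ hm hA hX hsdef hnadef hnzdef hnSdef ht2 hS
  have hX32 : X ≤ (3/2) * (L * m * na + 2 * L * m * nS + L * s * nz) := by
    nlinarith [mul_le_mul_of_nonneg_right h13 hX0]
  have hstep : X ^ 2 ≤ 9 * (L * m * na) ^ 2 + 9 * (L * s * nz) ^ 2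
      + (9/2) * (2 * L * m * nS) ^ 2 := by
    nlinarith [sq_nonneg (L * m * na + L * s * nz - 2 * L * m * nS),
      sq_nonneg (L * m * na - L * s * nz),
      mul_le_mul hX32 hX32 hX0 (by positivity)]
  have hmm : m ^ 2 ≤ (2*t) ^ 2 := by nlinarith
  have h1 : (L * m * na) ^ 2 ≤ L ^ 2 * (2*t) ^ 2 * na ^ 2 := by
    nlinarith [mul_le_mul_of_nonneg_right hmm (by positivity : (0:ℝ) ≤ L ^ 2 * na ^ 2)]
  have h2 : (L * s * nz) ^ 2 = L ^ 2 * m * nz ^ 2 := by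
    rw [mul_pow, mul_pow, hsq]
  have h2' : L ^ 2 * m * nz ^ 2 ≤ L ^ 2 * (2*t) * nz ^ 2 := by
    nlinarith [mul_le_mul_of_nonneg_right hm2 (by positivity : (0:ℝ) ≤ L ^ 2 * nz ^ 2)]
  have h3 : (2 * L * m * nS) ^ 2 ≤ 4 * L ^ 2 * (2*t) ^ 2 * nS ^ 2 := by
    nlinarith [mul_le_mul_of_nonneg_right hmm (by positivity : (0:ℝ) ≤ 4 * L ^ 2 * nS ^ 2)]
  linarith

set_option maxHeartbeats 2000000 in
theorem stmt2 (p : ℕ) (L : ℝ) (hL : 0 < L)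
    (S : EuclideanSpace ℝ (Fin p) → EuclideanSpace ℝ (Fin p))
    (hS : ∀ a a' : EuclideanSpace ℝ (Fin p), ‖S a - S a'‖ ≤ L * ‖a - a'‖)
    (t : ℝ) (ht0 : 0 ≤ t) (ht1 : t ≤ 1) (ht2 : t ≤ 1 / (12 * L)) :
    (∫⁻ z, ∫⁻ a₀, ENNReal.ofReal
        (‖S (Real.exp t • a₀ + (2 * (Real.exp t - 1)) • S a₀ +
            Real.sqrt (Real.exp t - 1) • z) - S a₀‖ ^ 2)
        ∂(stdGaussian p) ∂(stdGaussian p)) ≤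
      ENNReal.ofReal (36 * p * L ^ 2 * t * (1 + t)) +
        ENNReal.ofReal (72 * L ^ 2 * t ^ 2) *
          ∫⁻ z, ∫⁻ a₀, ENNReal.ofReal
            (‖S (Real.exp t • a₀ + (2 * (Real.exp t - 1)) • S a₀ +
                Real.sqrt (Real.exp t - 1) • z)‖ ^ 2)
            ∂(stdGaussian p) ∂(stdGaussian p) := by
  have hSc : Continuous S := by
    have hl : LipschitzWith (Real.toNNReal L) S := by
      apply LipschitzWith.of_dist_le_mul
      intro a a'
      rw [dist_eq_norm, dist_eq_norm, Real.coe_toNNReal L hL.le]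
      exact hS a a'
    exact hl.continuous
  set ν := stdGaussian p with hν
  set A : EuclideanSpace ℝ (Fin p) → EuclideanSpace ℝ (Fin p) → EuclideanSpace ℝ (Fin p) :=
    fun z a₀ => Real.exp t • a₀ + (2 * (Real.exp t - 1)) • S a₀ +
      Real.sqrt (Real.exp t - 1) • z with hAdef
  have hAc : Continuous (fun q : EuclideanSpace ℝ (Fin p) × EuclideanSpace ℝ (Fin p) =>
      A q.1 q.2) := by
    apply Continuous.add
    apply Continuous.add
    · fun_prop
    · fun_prop
    · fun_prop
  have hgmeas2 : Measurable (fun q : EuclideanSpace ℝ (Fin p) × EuclideanSpace ℝ (Fin p) =>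
      ENNReal.ofReal (‖S (A q.1 q.2)‖ ^ 2)) :=
    (((hSc.comp hAc).norm.pow 2).measurable).ennreal_ofReal
  have hAc1 : ∀ z, Continuous (fun a₀ => A z a₀) := by
    intro z
    apply Continuous.add
    apply Continuous.add
    · fun_prop
    · fun_prop
    · exact continuous_const
  have hgmeas : ∀ z, Measurable (fun a₀ => ENNReal.ofReal (‖S (A z a₀)‖ ^ 2)) := fun z =>
    (((hSc.comp (hAc1 z)).norm.pow 2).measurable).ennreal_ofReal
  have hImeas : Measurable (fun z => ∫⁻ a₀, ENNReal.ofReal (‖S (A z a₀)‖ ^ 2) ∂ν) :=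
    hgmeas2.lintegral_prod_right'
  have hpt : ∀ z a₀, ENNReal.ofReal (‖S (A z a₀) - S a₀‖ ^ 2) ≤
      ENNReal.ofReal (36 * L ^ 2 * t ^ 2 * ‖a₀‖ ^ 2) +
      ENNReal.ofReal (18 * L ^ 2 * t * ‖z‖ ^ 2) +
      ENNReal.ofReal (72 * L ^ 2 * t ^ 2) * ENNReal.ofReal (‖S (A z a₀)‖ ^ 2) := by
    intro z a₀
    rw [← ENNReal.ofReal_mul (by positivity), ← ENNReal.ofReal_add (by positivity) (by positivity),
      ← ENNReal.ofReal_add (by positivity) (by positivity)]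
    exact ENNReal.ofReal_le_ofReal (aux_pointwise hL hS ht0 ht1 ht2 a₀ z)
  have hnormsq : ∫⁻ a, ENNReal.ofReal (‖a‖ ^ 2) ∂ν = p := aux_lintegral_normsq p
  calc (∫⁻ z, ∫⁻ a₀, ENNReal.ofReal (‖S (A z a₀) - S a₀‖ ^ 2) ∂ν ∂ν)
      ≤ ∫⁻ z, ∫⁻ a₀, (ENNReal.ofReal (36 * L ^ 2 * t ^ 2 * ‖a₀‖ ^ 2) +
          ENNReal.ofReal (18 * L ^ 2 * t * ‖z‖ ^ 2) +
          ENNReal.ofReal (72 * L ^ 2 * t ^ 2) * ENNReal.ofReal (‖S (A z a₀)‖ ^ 2)) ∂ν ∂ν :=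
        lintegral_mono fun z => lintegral_mono fun a₀ => hpt z a₀
    _ = ∫⁻ z, (ENNReal.ofReal (36 * L ^ 2 * t ^ 2) * p +
          ENNReal.ofReal (18 * L ^ 2 * t * ‖z‖ ^ 2) +
          ENNReal.ofReal (72 * L ^ 2 * t ^ 2) *
            ∫⁻ a₀, ENNReal.ofReal (‖S (A z a₀)‖ ^ 2) ∂ν) ∂ν := by
        refine lintegral_congr fun z => ?_
        rw [lintegral_add_right _ ((hgmeas z).const_mul _),
          lintegral_add_right _ measurable_const,
          lintegral_const_mul _ (hgmeas z)]
        congr 2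
        · have : ∀ a₀ : EuclideanSpace ℝ (Fin p),
              ENNReal.ofReal (36 * L ^ 2 * t ^ 2 * ‖a₀‖ ^ 2) =
              ENNReal.ofReal (36 * L ^ 2 * t ^ 2) * ENNReal.ofReal (‖a₀‖ ^ 2) := fun a₀ =>
            ENNReal.ofReal_mul (by positivity)
          simp_rw [this]
          rw [lintegral_const_mul _ (by fun_prop), hnormsq]
        · rw [lintegral_const, measure_univ, mul_one]
    _ = ENNReal.ofReal (36 * L ^ 2 * t ^ 2) * p + ENNReal.ofReal (18 * L ^ 2 * t) * p +
          ENNReal.ofReal (72 * L ^ 2 * t ^ 2) *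
            ∫⁻ z, ∫⁻ a₀, ENNReal.ofReal (‖S (A z a₀)‖ ^ 2) ∂ν ∂ν := by
        rw [lintegral_add_right _ (hImeas.const_mul _),
          lintegral_add_right _ (by fun_prop : Measurable fun z : EuclideanSpace ℝ (Fin p) =>
            ENNReal.ofReal (18 * L ^ 2 * t * ‖z‖ ^ 2)),
          lintegral_const_mul _ hImeas, lintegral_const, measure_univ, mul_one]
        congr 2
        have : ∀ z : EuclideanSpace ℝ (Fin p),
            ENNReal.ofReal (18 * L ^ 2 * t * ‖z‖ ^ 2) =
            ENNReal.ofReal (18 * L ^ 2 * t) * ENNReal.ofReal (‖z‖ ^ 2) := fun z =>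
          ENNReal.ofReal_mul (by positivity)
        simp_rw [this]
        rw [lintegral_const_mul _ (by fun_prop), hnormsq]
    _ ≤ ENNReal.ofReal (36 * p * L ^ 2 * t * (1 + t)) +
          ENNReal.ofReal (72 * L ^ 2 * t ^ 2) *
            ∫⁻ z, ∫⁻ a₀, ENNReal.ofReal (‖S (A z a₀)‖ ^ 2) ∂ν ∂ν := by
        refine add_le_add_left ?_ _
        rw [← ENNReal.ofReal_natCast p,
          ← ENNReal.ofReal_mul (by positivity), ← ENNReal.ofReal_mul (by positivity),
          ← ENNReal.ofReal_add (by positivity) (by positivity)]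
        refine ENNReal.ofReal_le_ofReal ?_
        have hp : (0:ℝ) ≤ p := Nat.cast_nonneg p
        have h18 : (0:ℝ) ≤ 18 * L ^ 2 * t * p := by positivity
        nlinarith
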